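/- In the pure-soliton setup (q_i ≠ p_j for all i,j; Ω_{ij} = δ_{ij} + w_{ij} e^{ϑ(p_j)−ϑ(q_i)} with w_{ij} = ((q_j−p_j)/(q_i−p_j)) η_i K ξ_j; τ = e^{ϑ_{(2,…,2)}} det Ω; F = − e^{ϑ_{(2,…,2)}} θ₁ diag(e^{ϑ(p_i)}) adj(Ω) diag(e^{−ϑ(q_i)}) χ₁, where θ₁ has j-th column (q_j−p_j)ξ_j and χ₁ has i-th row η_i), the identity τ_x = p_{(2,…,2)} τ + tr(K F) holds as functions on ℝ³, where p_{(2,…,2)} = q₁ + ⋯ + q_N and τ_x denotes the partial derivative of τ with respect to x. -/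

import Mathlib

open Matrix

/-- `ϑ(p) = x p + y p² + t p³`. -/
noncomputable def th (p x y t : ℝ) : ℝ := x * p + y * p ^ 2 + t * p ^ 3

lemma trace_adjugate_mul_eq {N : ℕ} (A B : Matrix (Fin N) (Fin N) ℝ) :
    (A.adjugate * B).trace = ∑ i, (A.updateCol i fun k => B k i).det := by
  refine Finset.sum_congr rfl fun i _ => ?_
  rw [Matrix.diag_apply, ← Matrix.cramer_apply, Matrix.cramer_eq_adjugate_mulVec]
  simp [Matrix.mul_apply, Matrix.mulVec, dotProduct]

lemma jacobi {N : ℕ} {A : ℝ → Matrix (Fin N) (Fin N) ℝ} {B : Matrix (Fin N) (Fin N) ℝ} {x : ℝ}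
    (h : ∀ i j, HasDerivAt (fun s => A s i j) (B i j) x) :
    HasDerivAt (fun s => (A s).det) ((Matrix.adjugate (A x) * B).trace) x := by
  have key : ∀ σ : Equiv.Perm (Fin N),
      HasDerivAt (fun s => ∏ i, A s (σ i) i)
        (∑ i, (∏ j ∈ Finset.univ.erase i, A x (σ j) j) * B (σ i) i) x := by
    intro σ
    simpa [smul_eq_mul] using HasDerivAt.fun_finsetProd (fun i _ => h (σ i) i)
  have main := HasDerivAt.fun_sum (u := Finset.univ)
    (fun (σ : Equiv.Perm (Fin N)) _ =>
      (key σ).const_mul (((Equiv.Perm.sign σ : ℤ) : ℝ)))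
  have hfun : (fun s => (A s).det)
      = fun s => ∑ σ : Equiv.Perm (Fin N),
          ((Equiv.Perm.sign σ : ℤ) : ℝ) * ∏ i, A s (σ i) i := by
    funext s; rw [Matrix.det_apply']
  rw [hfun, trace_adjugate_mul_eq]
  refine main.congr_deriv ?_
  symm
  simp only [Finset.mul_sum]
  rw [Finset.sum_comm]
  refine Finset.sum_congr rfl fun i _ => ?_
  rw [Matrix.det_apply']
  refine Finset.sum_congr rfl fun σ _ => ?_
  congr 1
  rw [← Finset.mul_prod_erase Finset.univ _ (Finset.mem_univ i)]
  rw [Matrix.updateCol_self, mul_comm]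
  congr 1
  refine Finset.prod_congr rfl fun j hj => ?_
  rw [Matrix.updateCol_ne (Finset.ne_of_mem_erase hj)]

/-- In the pure-soliton setup, `τ_x = p_{(2,…,2)} τ + tr(K F)` holds,
where `p_{(2,…,2)} = q₁ + ⋯ + q_N`. -/
theorem stmt_6 {m n N : ℕ} (K : Matrix (Fin n) (Fin m) ℝ)
    (p q : Fin N → ℝ) (hpq : ∀ i j, q i ≠ p j)
    (ξ : Fin N → Fin m → ℝ) (η : Fin N → Fin n → ℝ)
    (w : Fin N → Fin N → ℝ)
    (hw : ∀ i j, w i j = ((q j - p j) / (q i - p j)) * (η i ⬝ᵥ K.mulVec (ξ j)))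
    (Ω : ℝ → ℝ → ℝ → Matrix (Fin N) (Fin N) ℝ)
    (hΩ : ∀ x y t, Ω x y t = Matrix.of fun i j =>
      (if i = j then (1 : ℝ) else 0) + w i j * Real.exp (th (p j) x y t - th (q i) x y t))
    (θ₁ : Matrix (Fin m) (Fin N) ℝ) (hθ₁ : θ₁ = Matrix.of fun a j => (q j - p j) * ξ j a)
    (χ₁ : Matrix (Fin N) (Fin n) ℝ) (hχ₁ : χ₁ = Matrix.of fun i b => η i b)
    (τ : ℝ → ℝ → ℝ → ℝ)
    (hτ : ∀ x y t, τ x y t = Real.exp (∑ i, th (q i) x y t) * (Ω x y t).det)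
    (F : ℝ → ℝ → ℝ → Matrix (Fin m) (Fin n) ℝ)
    (hF : ∀ x y t, F x y t = -(Real.exp (∑ i, th (q i) x y t)) •
      (θ₁ * Matrix.diagonal (fun i => Real.exp (th (p i) x y t))
        * (Ω x y t).adjugate
        * Matrix.diagonal (fun i => Real.exp (-th (q i) x y t)) * χ₁)) :
    ∀ x y t, deriv (fun s => τ s y t) x
      = (∑ i, q i) * τ x y t + (K * F x y t).trace := by
  intro x y t
  set S : ℝ := ∑ i, th (q i) x y t with hS
  set B : Matrix (Fin N) (Fin N) ℝ :=
    Matrix.of (fun i j => w i j *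
      (Real.exp (th (p j) x y t - th (q i) x y t) * (p j - q i))) with hB
  have hth : ∀ r : ℝ, HasDerivAt (fun s => th r s y t) r x := by
    intro r
    have : HasDerivAt (fun s : ℝ => s * r + y * r ^ 2 + t * r ^ 3) r x := by
      simpa using ((hasDerivAt_mul_const r).add_const (y * r ^ 2)).add_const (t * r ^ 3)
    simpa [th] using this
  have hA : ∀ i j, HasDerivAt (fun s => Ω s y t i j) (B i j) x := by
    intro i j
    have h1 : HasDerivAt (fun s => th (p j) s y t - th (q i) s y t) (p j - q i) x :=
      (hth (p j)).sub (hth (q i))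
    have h2 := (h1.exp.const_mul (w i j)).const_add (if i = j then (1:ℝ) else 0)
    have hfun : (fun s => Ω s y t i j) = fun s => (if i = j then (1:ℝ) else 0)
        + w i j * Real.exp (th (p j) s y t - th (q i) s y t) := by
      funext s; rw [hΩ]; rfl
    rw [hfun, hB]
    simpa [mul_assoc] using h2
  have hdet := jacobi (A := fun s => Ω s y t) (B := B) hA
  have hsum : HasDerivAt (fun s => ∑ i, th (q i) s y t) (∑ i, q i) x :=
    HasDerivAt.fun_sum fun i _ => hth (q i)
  have hexp : HasDerivAt (fun s => Real.exp (∑ i, th (q i) s y t))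
      (Real.exp S * (∑ i, q i)) x := hsum.exp
  have hτd : HasDerivAt (fun s => τ s y t)
      (Real.exp S * (∑ i, q i) * (Ω x y t).det
        + Real.exp S * (((Ω x y t).adjugate * B).trace)) x := by
    have hfun : (fun s => τ s y t)
        = fun s => Real.exp (∑ i, th (q i) s y t) * (Ω s y t).det := by
      funext s; rw [hτ]
    rw [hfun]
    exact hexp.mul hdet
  -- the trace identity
  set Dp : Matrix (Fin N) (Fin N) ℝ :=
    Matrix.diagonal (fun i => Real.exp (th (p i) x y t)) with hDp
  set Dq : Matrix (Fin N) (Fin N) ℝ :=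
    Matrix.diagonal (fun i => Real.exp (-th (q i) x y t)) with hDq
  have hC : χ₁ * (K * θ₁) = Matrix.of fun i j =>
      (q j - p j) * (η i ⬝ᵥ K.mulVec (ξ j)) := by
    ext i j
    simp only [hχ₁, hθ₁, Matrix.mul_apply, Matrix.of_apply, dotProduct,
      Matrix.mulVec, Finset.mul_sum, Finset.sum_mul]
    refine Finset.sum_congr rfl fun b _ => Finset.sum_congr rfl fun a _ => ?_
    ring
  have hP : Dq * (χ₁ * (K * (θ₁ * Dp))) = -B := by
    have : χ₁ * (K * (θ₁ * Dp)) = (χ₁ * (K * θ₁)) * Dp := by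
      simp only [Matrix.mul_assoc]
    rw [this, hC]
    ext i j
    have hne : q i - p j ≠ 0 := sub_ne_zero.mpr (hpq i j)
    simp only [hDq, hDp, Matrix.diagonal_mul, Matrix.mul_diagonal, Matrix.of_apply,
      Matrix.neg_apply, hB, hw, Real.exp_sub, Real.exp_neg]
    field_simp
    ring
  have htr : (K * F x y t).trace = Real.exp S * ((Ω x y t).adjugate * B).trace := by
    rw [hF]
    rw [Matrix.mul_smul, Matrix.trace_smul]
    have step : (K * (θ₁ * Dp * (Ω x y t).adjugate * Dq * χ₁)).trace
        = (((Ω x y t).adjugate) * (Dq * (χ₁ * (K * (θ₁ * Dp))))).trace := by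
      rw [Matrix.trace_mul_comm]
      simp only [Matrix.mul_assoc]
      rw [Matrix.trace_mul_comm (A := θ₁)]
      simp only [Matrix.mul_assoc]
      rw [Matrix.trace_mul_comm (A := Dp)]
      simp only [Matrix.mul_assoc]
    rw [step, hP]
    simp [Matrix.mul_neg, Matrix.trace_neg, hS]
  rw [hτd.deriv, hτ, htr]
  ring
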